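/- Let f(z) = ∑_{k=1}^∞ a_k z^{n_k} be analytic on 𝔻 where n_{k+1} ≥ λ n_k for some λ > 1 and all k. Then f belongs to the Bloch space if and only if the sequence (a_k) is bounded. -/

import Mathlib

open MeasureTheory Complex Metric
open scoped NNReal ENNReal Classical

/-- `f` belongs to the Bloch space of the unit disk. -/
def MemBloch (f : ℂ → ℂ) : Prop :=
  DifferentiableOn ℂ f (Metric.ball 0 1) ∧
    ∃ C : ℝ, ∀ z ∈ Metric.ball (0 : ℂ) 1, (1 - ‖z‖ ^ 2) * ‖deriv f z‖ ≤ C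

section Aux

variable {a : ℕ → ℂ} {n : ℕ → ℕ} {lam : ℝ}


lemma lac_strictMono (hlam : 1 < lam) (hpos : ∀ k, 0 < n k)
    (hlac : ∀ k, lam * (n k : ℝ) ≤ (n (k + 1) : ℝ)) : StrictMono n := by
  apply strictMono_nat_of_lt_succ
  intro k
  have hk : (0:ℝ) < (n k : ℝ) := by exact_mod_cast hpos k
  have h1 : (n k : ℝ) < n (k+1) := lt_of_lt_of_le (by nlinarith) (hlac k)
  exact_mod_cast h1


lemma mul_pow_le_sum {r : ℝ} (h0 : 0 ≤ r) (h1 : r ≤ 1) (N : ℕ) :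
    (N : ℝ) * r ^ (N - 1) ≤ ∑ j ∈ Finset.range N, r ^ j := by
  have := Finset.card_nsmul_le_sum (Finset.range N) (fun j => r ^ j) (r ^ (N-1))
    (fun j hj => pow_le_pow_of_le_one h0 h1 (by
      have := Finset.mem_range.mp hj; omega))
  simpa [nsmul_eq_mul] using this


lemma geom_sum_le_inv {r : ℝ} (h0 : 0 ≤ r) (h1 : r < 1) (N : ℕ) :
    ∑ j ∈ Finset.range N, r ^ j ≤ (1 - r)⁻¹ := by
  have hs : Summable (fun j : ℕ => r ^ j) := summable_geometric_of_lt_one h0 h1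
  calc ∑ j ∈ Finset.range N, r ^ j ≤ ∑' j : ℕ, r ^ j :=
        Summable.sum_le_tsum _ (fun j _ => pow_nonneg h0 j) hs
    _ = (1 - r)⁻¹ := tsum_geometric_of_lt_one h0 h1


lemma summable_nat_mul_pow {t : ℝ} (h0 : 0 ≤ t) (h1 : t < 1) :
    Summable (fun m : ℕ => (m : ℝ) * t ^ (m - 1)) := by
  rw [← summable_nat_add_iff 1]
  have ht : ‖t‖ < 1 := by rwa [Real.norm_eq_abs, _root_.abs_of_nonneg h0]
  have h2 : Summable (fun m : ℕ => (m : ℝ) * t ^ m + t ^ m) :=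
    ((summable_pow_mul_geometric_of_norm_lt_one 1 ht).congr (by simp)).add
      (summable_geometric_of_lt_one h0 h1)
  apply h2.congr
  intro m
  have : m + 1 - 1 = m := rfl
  rw [this]
  push_cast
  ring


lemma lac_partial (hlam : 1 < lam) (hpos : ∀ k, 0 < n k)
    (hlac : ∀ k, lam * (n k : ℝ) ≤ (n (k + 1) : ℝ))
    {r : ℝ} (h0 : 0 ≤ r) (h1 : r < 1) (K : ℕ) :
    ∑ k ∈ Finset.range (K+1), (n k : ℝ) * r ^ (n k - 1)
      ≤ (lam/(lam-1)) * ∑ j ∈ Finset.range (n K), r ^ j := by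
  have hmono := lac_strictMono hlam hpos hlac
  have hc1 : (1:ℝ) ≤ lam/(lam-1) := by
    rw [le_div_iff₀ (by linarith)]; linarith
  have hsumnn : ∀ N, (0:ℝ) ≤ ∑ j ∈ Finset.range N, r ^ j :=
    fun N => Finset.sum_nonneg fun j _ => pow_nonneg h0 j
  induction K with
  | zero =>
      rw [show (0+1)=1 from rfl, Finset.sum_range_one]
      calc (n 0 : ℝ) * r ^ (n 0 - 1) ≤ ∑ j ∈ Finset.range (n 0), r ^ j :=
            mul_pow_le_sum h0 h1.le (n 0)
        _ ≤ (lam/(lam-1)) * ∑ j ∈ Finset.range (n 0), r ^ j := by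
            nlinarith [hsumnn (n 0)]
  | succ K ih =>
      rw [Finset.sum_range_succ]
      have hle : n K ≤ n (K+1) := (hmono (Nat.lt_succ_self K)).le
      have key : (n (K+1) : ℝ) * r ^ (n (K+1) - 1)
          ≤ (lam/(lam-1)) * ∑ j ∈ Finset.Ico (n K) (n (K+1)), r ^ j := by
        have hcard : ((Finset.Ico (n K) (n (K+1))).card : ℝ) = (n (K+1) : ℝ) - n K := by
          rw [Nat.card_Ico]; exact Nat.cast_sub hle
        have hsum_ge : ((n (K+1) : ℝ) - n K) * r ^ (n (K+1) - 1)
            ≤ ∑ j ∈ Finset.Ico (n K) (n (K+1)), r ^ j := by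
          have := Finset.card_nsmul_le_sum (Finset.Ico (n K) (n (K+1))) (fun j => r ^ j)
            (r ^ (n (K+1) - 1)) (fun j hj => pow_le_pow_of_le_one h0 h1.le (by
              have := (Finset.mem_Ico.mp hj).2; omega))
          rw [nsmul_eq_mul, hcard] at this
          exact this
        have hN : (n (K+1) : ℝ) ≤ (lam/(lam-1)) * ((n (K+1) : ℝ) - n K) := by
          rw [div_mul_eq_mul_div, le_div_iff₀ (by linarith)]
          have := hlac K
          nlinarith
        have hrpow : (0:ℝ) ≤ r ^ (n (K+1) - 1) := pow_nonneg h0 _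
        calc (n (K+1) : ℝ) * r ^ (n (K+1) - 1)
            ≤ ((lam/(lam-1)) * ((n (K+1) : ℝ) - n K)) * r ^ (n (K+1) - 1) := by
              exact mul_le_mul_of_nonneg_right hN hrpow
          _ = (lam/(lam-1)) * (((n (K+1) : ℝ) - n K) * r ^ (n (K+1) - 1)) := by ring
          _ ≤ (lam/(lam-1)) * ∑ j ∈ Finset.Ico (n K) (n (K+1)), r ^ j := by
              exact mul_le_mul_of_nonneg_left hsum_ge (by linarith)
      calc ∑ k ∈ Finset.range (K+1), (n k : ℝ) * r ^ (n k - 1) + (n (K+1) : ℝ) * r ^ (n (K+1) - 1)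
          ≤ (lam/(lam-1)) * ∑ j ∈ Finset.range (n K), r ^ j
            + (lam/(lam-1)) * ∑ j ∈ Finset.Ico (n K) (n (K+1)), r ^ j := add_le_add ih key
        _ = (lam/(lam-1)) * ∑ j ∈ Finset.range (n (K+1)), r ^ j := by
            rw [← mul_add, Finset.sum_range_add_sum_Ico _ hle]


lemma lac_tsum (hlam : 1 < lam) (hpos : ∀ k, 0 < n k)
    (hlac : ∀ k, lam * (n k : ℝ) ≤ (n (k + 1) : ℝ))
    {r : ℝ} (h0 : 0 ≤ r) (h1 : r < 1) :
    ∑' k, (n k : ℝ) * r ^ (n k - 1) ≤ (lam/(lam-1)) * (1-r)⁻¹ := by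
  have hc0 : (0:ℝ) ≤ lam/(lam-1) := by apply div_nonneg <;> linarith
  have hinv : (0:ℝ) ≤ (1-r)⁻¹ := by
    apply inv_nonneg.mpr; linarith
  apply Real.tsum_le_of_sum_range_le (fun k => by positivity)
  intro K
  cases K with
  | zero => simpa using mul_nonneg hc0 hinv
  | succ K =>
      refine (lac_partial hlam hpos hlac h0 h1 K).trans ?_
      exact mul_le_mul_of_nonneg_left (geom_sum_le_inv h0 h1 _) hc0


lemma lac_hasDerivAt (hlam : 1 < lam) (hpos : ∀ k, 0 < n k)
    (hlac : ∀ k, lam * (n k : ℝ) ≤ (n (k + 1) : ℝ))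
    {f : ℂ → ℂ}
    (hf : ∀ z ∈ Metric.ball (0:ℂ) 1, HasSum (fun k => a k * z ^ n k) (f z))
    {z : ℂ} (hz : z ∈ Metric.ball (0:ℂ) 1) :
    HasDerivAt f (∑' k, a k * ((n k : ℂ) * z ^ (n k - 1))) z ∧
      Summable (fun k => ‖a k‖ * ((n k : ℝ) * ‖z‖ ^ (n k - 1))) := by
  have hmono := lac_strictMono hlam hpos hlac
  set s := ‖z‖ with hs_def
  have hs0 : 0 ≤ s := norm_nonneg z
  have hs : s < 1 := by simpa [mem_ball, dist_zero_right] using hz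
  set r : ℝ := (1 + s) / 2 with hr_def
  set r0 : ℝ := (3 + s) / 4 with hr0_def
  have hsr : s < r := by rw [hr_def]; linarith
  have hr0pos : 0 < r := by rw [hr_def]; linarith
  have hrr0 : r < r0 := by rw [hr_def, hr0_def]; linarith
  have hr01 : r0 < 1 := by rw [hr0_def]; linarith
  have hr0pos' : 0 < r0 := lt_trans hr0pos hrr0
  -- bound on coefficients from convergence at radius r0
  have hr0ball : ((r0 : ℂ)) ∈ Metric.ball (0:ℂ) 1 := by
    simp only [mem_ball, dist_zero_right, Complex.norm_real]
    rw [Real.norm_eq_abs, _root_.abs_of_nonneg hr0pos'.le]; exact hr01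
  have htend : Filter.Tendsto (fun k => ‖a k‖ * r0 ^ (n k)) Filter.atTop (nhds 0) := by
    have h1 := (hf _ hr0ball).summable.tendsto_atTop_zero.norm
    simp only [norm_zero] at h1
    apply h1.congr
    intro k
    rw [norm_mul, norm_pow, Complex.norm_real, Real.norm_eq_abs,
      _root_.abs_of_nonneg hr0pos'.le]
  obtain ⟨B, hB⟩ : ∃ B : ℝ, ∀ k, ‖a k‖ * r0 ^ (n k) ≤ B := by
    obtain ⟨B, hB⟩ := htend.bddAbove_range
    exact ⟨B, fun k => hB (Set.mem_range_self k)⟩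
  -- the summable majorant
  have ht0 : 0 ≤ r / r0 := div_nonneg hr0pos.le hr0pos'.le
  have ht1 : r / r0 < 1 := (div_lt_one hr0pos').mpr hrr0
  have hu : Summable (fun k => (B / r0) * ((n k : ℝ) * (r / r0) ^ (n k - 1))) :=
    (((summable_nat_mul_pow ht0 ht1).comp_injective hmono.injective).mul_left _)
  -- pointwise derivative bound on ball 0 r
  have hbound : ∀ k, ∀ x : ℂ, x ∈ Metric.ball (0:ℂ) r →
      ‖a k * ((n k : ℂ) * x ^ (n k - 1))‖ ≤ (B / r0) * ((n k : ℝ) * (r / r0) ^ (n k - 1)) := by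
    intro k x hx
    have hxr : ‖x‖ ≤ r := by
      have := mem_ball.mp hx; rw [dist_zero_right] at this; exact this.le
    have hak : ‖a k‖ ≤ B / r0 ^ (n k) := by
      rw [le_div_iff₀ (pow_pos hr0pos' _)]; exact hB k
    have h1 : ‖a k * ((n k : ℂ) * x ^ (n k - 1))‖
        = ‖a k‖ * ((n k : ℝ) * ‖x‖ ^ (n k - 1)) := by
      simp [norm_mul, norm_pow]
    rw [h1]
    have h2 : ‖a k‖ * ((n k : ℝ) * ‖x‖ ^ (n k - 1))
        ≤ (B / r0 ^ (n k)) * ((n k : ℝ) * r ^ (n k - 1)) := by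
      apply mul_le_mul hak
      · exact mul_le_mul_of_nonneg_left (pow_le_pow_left₀ (norm_nonneg x) hxr _)
          (Nat.cast_nonneg _)
      · positivity
      · exact le_trans (by positivity) hak
    refine h2.trans_eq ?_
    obtain ⟨m, hm⟩ : ∃ m, n k = m + 1 := ⟨n k - 1, (Nat.succ_pred_eq_of_pos (hpos k)).symm⟩
    rw [hm]
    simp only [Nat.add_sub_cancel, div_pow, pow_succ]
    field_simp
  -- uniform convergence of the derivative partial sums on ball 0 r
  have hUnif := tendstoUniformlyOn_tsum_nat hu hbound
  have hz_in : z ∈ Metric.ball (0:ℂ) r := by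
    rw [mem_ball, dist_zero_right]; exact hsr
  have hsub : Metric.ball (0:ℂ) r ⊆ Metric.ball (0:ℂ) 1 :=
    Metric.ball_subset_ball (by linarith)
  have hD : HasDerivAt f (∑' k, a k * ((n k : ℂ) * z ^ (n k - 1))) z := by
    apply hasDerivAt_of_tendstoLocallyUniformlyOn Metric.isOpen_ball
      (f := fun N x => ∑ k ∈ Finset.range N, a k * x ^ n k)
      hUnif.tendstoLocallyUniformlyOn ?_ ?_ hz_in
    · filter_upwards with N x hx
      apply HasDerivAt.fun_sum
      intro k _
      exact ((hasDerivAt_pow (n k) x).const_mul (a k))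
    · intro x hx
      exact (hf x (hsub hx)).tendsto_sum_nat
  refine ⟨hD, ?_⟩
  apply Summable.of_nonneg_of_le (fun k => by positivity) (fun k => ?_) hu
  have := hbound k z hz_in
  rw [norm_mul, norm_mul, norm_pow, Complex.norm_natCast] at this
  exact this


lemma bloch_of_bounded (hlam : 1 < lam) (hpos : ∀ k, 0 < n k)
    (hlac : ∀ k, lam * (n k : ℝ) ≤ (n (k + 1) : ℝ))
    {f : ℂ → ℂ}
    (hf : ∀ z ∈ Metric.ball (0:ℂ) 1, HasSum (fun k => a k * z ^ n k) (f z))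
    {M : ℝ} (hM : ∀ k, ‖a k‖ ≤ M) :
    DifferentiableOn ℂ f (Metric.ball 0 1) ∧
      ∃ C : ℝ, ∀ z ∈ Metric.ball (0 : ℂ) 1, (1 - ‖z‖ ^ 2) * ‖deriv f z‖ ≤ C := by
  have hmono := lac_strictMono hlam hpos hlac
  set c : ℝ := lam / (lam - 1) with hc_def
  have hc0 : 0 ≤ c := by
    apply div_nonneg <;> linarith
  have hM0 : 0 ≤ M := (norm_nonneg (a 0)).trans (hM 0)
  refine ⟨fun z hz => ((lac_hasDerivAt hlam hpos hlac hf hz).1.differentiableAt).differentiableWithinAt, ⟨2 * (M * c), ?_⟩⟩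
  intro z hz
  obtain ⟨hD, hS⟩ := lac_hasDerivAt hlam hpos hlac hf hz
  rw [hD.deriv]
  have hs0 : 0 ≤ ‖z‖ := norm_nonneg z
  have hs : ‖z‖ < 1 := by simpa [mem_ball, dist_zero_right] using hz
  have hnorm : ∀ k, ‖a k * ((n k:ℂ) * z ^ (n k - 1))‖ = ‖a k‖ * ((n k:ℝ) * ‖z‖ ^ (n k - 1)) := by
    intro k; simp [norm_mul, norm_pow]
  have hsum2 : Summable (fun k => (n k:ℝ) * ‖z‖ ^ (n k - 1)) :=
    (summable_nat_mul_pow hs0 hs).comp_injective hmono.injective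
  have h1 : ‖∑' k, a k * ((n k:ℂ) * z ^ (n k - 1))‖
      ≤ ∑' k, ‖a k‖ * ((n k:ℝ) * ‖z‖ ^ (n k - 1)) := by
    refine (norm_tsum_le_tsum_norm ?_).trans_eq (tsum_congr hnorm)
    exact hS.congr (fun k => (hnorm k).symm)
  have h2 : ∑' k, ‖a k‖ * ((n k:ℝ) * ‖z‖ ^ (n k - 1))
      ≤ M * ∑' k, (n k:ℝ) * ‖z‖ ^ (n k - 1) := by
    rw [← tsum_mul_left]
    refine Summable.tsum_le_tsum (fun k => ?_) hS (hsum2.mul_left M)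
    exact mul_le_mul_of_nonneg_right (hM k) (by positivity)
  have h3 : ∑' k, (n k:ℝ) * ‖z‖ ^ (n k - 1) ≤ c * (1 - ‖z‖)⁻¹ :=
    lac_tsum hlam hpos hlac hs0 hs
  have hchain : ‖∑' k, a k * ((n k:ℂ) * z ^ (n k - 1))‖ ≤ M * (c * (1 - ‖z‖)⁻¹) := by
    refine h1.trans (h2.trans ?_)
    exact mul_le_mul_of_nonneg_left h3 hM0
  have hs1 : (0:ℝ) < 1 - ‖z‖ := by linarith
  have hsq : (0:ℝ) ≤ 1 - ‖z‖ ^ 2 := by nlinarith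
  calc (1 - ‖z‖ ^ 2) * ‖∑' k, a k * ((n k:ℂ) * z ^ (n k - 1))‖
      ≤ (1 - ‖z‖ ^ 2) * (M * (c * (1 - ‖z‖)⁻¹)) := mul_le_mul_of_nonneg_left hchain hsq
    _ = (1 + ‖z‖) * (M * c) * ((1 - ‖z‖) * (1 - ‖z‖)⁻¹) := by ring
    _ = (1 + ‖z‖) * (M * c) := by rw [mul_inv_cancel₀ hs1.ne']; ring
    _ ≤ 2 * (M * c) := by nlinarith [mul_nonneg hM0 hc0]


lemma bounded_of_bloch (hlam : 1 < lam) (hpos : ∀ k, 0 < n k)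
    (hlac : ∀ k, lam * (n k : ℝ) ≤ (n (k + 1) : ℝ))
    {f : ℂ → ℂ}
    (hf : ∀ z ∈ Metric.ball (0:ℂ) 1, HasSum (fun k => a k * z ^ n k) (f z))
    (hdiff : DifferentiableOn ℂ f (Metric.ball 0 1))
    {C : ℝ} (hC0 : 0 ≤ C)
    (hC : ∀ z ∈ Metric.ball (0:ℂ) 1, (1 - ‖z‖ ^ 2) * ‖deriv f z‖ ≤ C) :
    ∀ k, ‖a k‖ ≤ 4 * C := by
  have hmono := lac_strictMono hlam hpos hlac
  have hmono1 : StrictMono (fun k => n k - 1) := by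
    intro i j hij
    have h1 := hmono hij
    have h2 := hpos i
    show n i - 1 < n j - 1
    omega
  have inj1 : Function.Injective (fun k => n k - 1) := hmono1.injective
  set F := deriv f with hF_def
  have hF : DifferentiableOn ℂ F (Metric.ball 0 1) :=
    ((hdiff.analyticOnNhd Metric.isOpen_ball).deriv).differentiableOn
  -- coefficient function of the derivative series
  set b : ℕ → ℂ := fun m => if h : ∃ k, n k - 1 = m then (n (h.choose) : ℂ) * a (h.choose) else 0
    with hb_def
  have b_eval : ∀ k, b (n k - 1) = (n k : ℂ) * a k := by
    intro k
    have hex : ∃ j, n j - 1 = n k - 1 := ⟨k, rfl⟩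
    rw [hb_def]
    simp only [dif_pos hex]
    have hck : hex.choose = k :=
      inj1 (show (fun j => n j - 1) hex.choose = (fun j => n j - 1) k from hex.choose_spec)
    rw [hck]
  have b_zero : ∀ m, m ∉ Set.range (fun k => n k - 1) → b m = 0 := by
    intro m hm
    rw [hb_def]
    refine dif_neg ?_
    rintro ⟨k, hk⟩
    exact hm ⟨k, hk⟩
  -- HasSum for the derivative series at every point of the unit ball
  have hq_sum : ∀ z ∈ Metric.ball (0:ℂ) 1, HasSum (fun m => b m * z ^ m) (F z) := by
    intro z hz
    obtain ⟨hD, hS⟩ := lac_hasDerivAt hlam hpos hlac hf hz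
    have hnorm : ∀ k, ‖a k * ((n k:ℂ) * z ^ (n k - 1))‖
        = ‖a k‖ * ((n k:ℝ) * ‖z‖ ^ (n k - 1)) := by
      intro k; simp [norm_mul, norm_pow]
    have hsum : Summable (fun k => a k * ((n k:ℂ) * z ^ (n k - 1))) :=
      Summable.of_norm (hS.congr fun k => (hnorm k).symm)
    have hHas : HasSum (fun k => a k * ((n k:ℂ) * z ^ (n k - 1))) (F z) := by
      rw [hF_def, hD.deriv]
      exact hsum.hasSum
    have hzero : ∀ m ∉ Set.range (fun k => n k - 1), b m * z ^ m = 0 := by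
      intro m hm; rw [b_zero m hm, zero_mul]
    have hcomp : ((fun m => b m * z ^ m) ∘ (fun k => n k - 1))
        = fun k => a k * ((n k:ℂ) * z ^ (n k - 1)) := by
      funext k
      simp only [Function.comp_apply]
      rw [b_eval k]; ring
    refine (Function.Injective.hasSum_iff inj1 hzero).mp ?_
    rw [hcomp]
    exact hHas
  -- radius of the coefficient series is at least 1
  have hrad : 1 ≤ (FormalMultilinearSeries.ofScalars ℂ b).radius := by
    apply ENNReal.le_of_forall_nnreal_lt
    intro ρ hρ
    have hρ1 : (ρ : ℝ) < 1 := by exact_mod_cast hρ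
    have hz1 : ((ρ:ℝ):ℂ) ∈ Metric.ball (0:ℂ) 1 := by
      simp only [mem_ball, dist_zero_right, Complex.norm_real, Real.norm_eq_abs]
      rwa [_root_.abs_of_nonneg ρ.coe_nonneg]
    have htend := (hq_sum _ hz1).summable.tendsto_atTop_zero.norm
    simp only [norm_zero] at htend
    obtain ⟨C', hC'⟩ := htend.bddAbove_range
    apply FormalMultilinearSeries.le_radius_of_bound _ C'
    intro m
    rw [FormalMultilinearSeries.ofScalars_norm]
    have := hC' (Set.mem_range_self m)
    rw [norm_mul, norm_pow, Complex.norm_real, Real.norm_eq_abs,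
      _root_.abs_of_nonneg ρ.coe_nonneg] at this
    exact this
  -- F has the explicit power series on the unit ball
  have hq : HasFPowerSeriesOnBall F (FormalMultilinearSeries.ofScalars ℂ b) 0 1 := by
    refine ⟨hrad, zero_lt_one, ?_⟩
    intro y hy
    have hy' : y ∈ Metric.ball (0:ℂ) 1 := by
      rw [show ((1:ℝ≥0∞)) = ((1:ℝ≥0):ℝ≥0∞) from rfl, Metric.emetric_ball_nnreal] at hy
      simpa using hy
    have := hq_sum y hy'
    simp only [FormalMultilinearSeries.ofScalars_apply_eq, smul_eq_mul, zero_add]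
    exact this
  -- main estimate for each k
  intro k
  set N := n k with hN_def
  have hN : 1 ≤ N := hpos k
  have hNR : (1:ℝ) ≤ (N:ℝ) := by exact_mod_cast hN
  set x : ℝ := 1/(2*(N:ℝ)) with hx_def
  have hx0 : 0 < x := by rw [hx_def]; positivity
  have hxh : x ≤ 1/2 := by
    rw [hx_def]
    apply div_le_div_of_nonneg_left (by norm_num) (by norm_num)
    linarith
  have hxN : x * (2*(N:ℝ)) = 1 := by
    rw [hx_def]; field_simp
  set r : ℝ := 1 - x with hr_def
  have hrhalf : (1:ℝ)/2 ≤ r := by rw [hr_def]; linarith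
  have hr0 : 0 < r := lt_of_lt_of_le (by norm_num) hrhalf
  have hr1 : r < 1 := by rw [hr_def]; linarith
  set R : ℝ≥0 := ⟨r, hr0.le⟩ with hR_def
  have hRr : (R : ℝ) = r := rfl
  have hRpos : 0 < R := by exact_mod_cast hr0
  have hcb : DifferentiableOn ℂ F (Metric.closedBall (0:ℂ) R) := by
    rw [hRr]
    exact hF.mono (Metric.closedBall_subset_ball hr1)
  have h1 : HasFPowerSeriesOnBall F (cauchyPowerSeries F 0 R) 0 R :=
    hcb.hasFPowerSeriesOnBall hRpos
  have heq : FormalMultilinearSeries.ofScalars ℂ b = cauchyPowerSeries F 0 R :=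
    hq.hasFPowerSeriesAt.eq_formalMultilinearSeries h1.hasFPowerSeriesAt
  -- bound the integral of ‖F‖ on the circle of radius r
  have hmem : ∀ θ : ℝ, circleMap 0 r θ ∈ Metric.ball (0:ℂ) 1 := by
    intro θ
    simp only [mem_ball, dist_zero_right]
    rw [norm_circleMap_zero, _root_.abs_of_nonneg hr0.le]
    exact hr1
  have hcont : Continuous fun θ : ℝ => ‖F (circleMap 0 r θ)‖ :=
    (hF.continuousOn.comp_continuous (continuous_circleMap 0 r) hmem).norm
  have hr2 : x ≤ 1 - r^2 := by
    rw [hr_def]; nlinarith [sq_nonneg x]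
  have hptbound : ∀ θ : ℝ, ‖F (circleMap 0 r θ)‖ ≤ 2*(N:ℝ)*C := by
    intro θ
    have hw := hC _ (hmem θ)
    have hwn : ‖circleMap 0 r θ‖ = r := by
      rw [norm_circleMap_zero, _root_.abs_of_nonneg hr0.le]
    rw [hwn] at hw
    have h5 : x * ‖F (circleMap 0 r θ)‖ ≤ C :=
      le_trans (mul_le_mul_of_nonneg_right hr2 (norm_nonneg _)) hw
    have h6 : ‖F (circleMap 0 r θ)‖ = (2*(N:ℝ)) * (x * ‖F (circleMap 0 r θ)‖) := by
      rw [← mul_assoc, mul_comm (2*(N:ℝ)) x, hxN, one_mul]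
    rw [h6, mul_comm (2*(N:ℝ)) C] at *
    calc (2*(N:ℝ)) * (x * ‖F (circleMap 0 r θ)‖) ≤ (2*(N:ℝ)) * C :=
          mul_le_mul_of_nonneg_left h5 (by positivity)
      _ = C * (2*(N:ℝ)) := mul_comm _ _
  have hint : (∫ θ : ℝ in (0)..(2*Real.pi), ‖F (circleMap 0 r θ)‖)
      ≤ 2*Real.pi * (2*(N:ℝ)*C) := by
    calc (∫ θ : ℝ in (0)..(2*Real.pi), ‖F (circleMap 0 r θ)‖)
        ≤ ∫ _ : ℝ in (0)..(2*Real.pi), 2*(N:ℝ)*C :=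
          intervalIntegral.integral_mono_on Real.two_pi_pos.le
            (hcont.intervalIntegrable _ _) intervalIntegrable_const
            (fun θ _ => hptbound θ)
      _ = 2*Real.pi * (2*(N:ℝ)*C) := by
          rw [intervalIntegral.integral_const]
          simp [smul_eq_mul]
  -- Bernoulli: r^(N-1) ≥ 1/2
  have hbern : (1:ℝ)/2 ≤ r ^ (N-1) := by
    have h2 : (-2:ℝ) ≤ -x := by linarith
    have hb := one_add_mul_le_pow h2 (N-1)
    have hcast : ((N-1 : ℕ) : ℝ) = (N:ℝ) - 1 := by
      rw [Nat.cast_sub hN]; norm_num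
    rw [hcast] at hb
    have hbase : (1 + -x) = r := by rw [hr_def]; ring
    rw [hbase] at hb
    have harith : (1:ℝ)/2 ≤ 1 + ((N:ℝ)-1) * -x := by
      have h7 : ((N:ℝ)-1) * x ≤ (N:ℝ) * x := by nlinarith
      have h8 : (N:ℝ) * x = 1/2 := by
        rw [hx_def]; field_simp
      nlinarith
    linarith
  -- putting it together
  have hkey := norm_cauchyPowerSeries_le F 0 (R:ℝ) (N-1)
  rw [← heq] at hkey
  rw [FormalMultilinearSeries.ofScalars_norm] at hkey
  have hb_nk : b (N - 1) = (N : ℂ) * a k := b_eval k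
  rw [hb_nk] at hkey
  have hnorm_b : ‖(N:ℂ) * a k‖ = (N:ℝ) * ‖a k‖ := by
    rw [norm_mul, Complex.norm_natCast]
  rw [hnorm_b] at hkey
  have habsR : |(R:ℝ)| = r := by rw [hRr, _root_.abs_of_nonneg hr0.le]
  rw [habsR] at hkey
  have hinvpow : (r⁻¹) ^ (N-1) ≤ 2 := by
    rw [inv_pow]
    have := inv_anti₀ (by norm_num : (0:ℝ) < 1/2) hbern
    simpa using this
  have hstep : ((2 * Real.pi)⁻¹ * ∫ θ : ℝ in (0)..(2*Real.pi), ‖F (circleMap 0 r θ)‖)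
      ≤ 2*(N:ℝ)*C := by
    rw [inv_mul_le_iff₀ Real.two_pi_pos]
    calc (∫ θ : ℝ in (0)..(2*Real.pi), ‖F (circleMap 0 r θ)‖)
        ≤ 2*Real.pi * (2*(N:ℝ)*C) := hint
      _ = 2 * Real.pi * (2*(N:ℝ)*C) := by ring
  have hfinal : (N:ℝ) * ‖a k‖ ≤ (2*(N:ℝ)*C) * 2 := by
    refine hkey.trans ?_
    have hnn : (0:ℝ) ≤ (2*(N:ℝ)*C) := by positivity
    calc ((2 * Real.pi)⁻¹ * ∫ θ : ℝ in (0)..(2*Real.pi), ‖F (circleMap 0 r θ)‖) * r⁻¹ ^ (N-1)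
        ≤ (2*(N:ℝ)*C) * r⁻¹ ^ (N-1) := by
          apply mul_le_mul_of_nonneg_right hstep (by positivity)
      _ ≤ (2*(N:ℝ)*C) * 2 := mul_le_mul_of_nonneg_left hinvpow hnn
  have hNpos : (0:ℝ) < (N:ℝ) := by linarith
  have : (N:ℝ) * ‖a k‖ ≤ (N:ℝ) * (4*C) := by
    calc (N:ℝ) * ‖a k‖ ≤ (2*(N:ℝ)*C) * 2 := hfinal
      _ = (N:ℝ) * (4*C) := by ring
  exact le_of_mul_le_mul_left this hNpos


end Aux

/-- A lacunary series `f(z) = ∑ aₖ z^{nₖ}` (with `n_{k+1} ≥ λ nₖ`, `λ > 1`)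
analytic on `𝔻` belongs to the Bloch space iff the coefficient sequence `(aₖ)` is bounded. -/
theorem statement5 (a : ℕ → ℂ) (n : ℕ → ℕ) (lam : ℝ) (hlam : 1 < lam)
    (hpos : ∀ k, 0 < n k)
    (hlac : ∀ k, lam * (n k : ℝ) ≤ (n (k + 1) : ℝ))
    (f : ℂ → ℂ)
    (hf : ∀ z ∈ Metric.ball (0 : ℂ) 1, HasSum (fun k => a k * z ^ n k) (f z)) :
    MemBloch f ↔ ∃ M : ℝ, ∀ k, ‖a k‖ ≤ M := by
  constructor
  · rintro ⟨hdiff, C, hC⟩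
    have hC0 : 0 ≤ C := by
      have h0 := hC 0 (Metric.mem_ball_self one_pos)
      simp only [norm_zero] at h0
      have := norm_nonneg (deriv f 0)
      nlinarith
    exact ⟨4*C, bounded_of_bloch hlam hpos hlac hf hdiff hC0 hC⟩
  · rintro ⟨M, hM⟩
    exact bloch_of_bounded hlam hpos hlac hf hM
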